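/- Let k ≥ 1, a = (a_1,…,a_k) ∈ ℝ^k and Y = (y_1,…,y_{2k}) ∈ ℝ^{2k}. Then the characteristic polynomial of the (2k+1)×(2k+1) skew-symmetric matrix A(a,Y) equals X·∏_{j=1}^{k}(X² + a_j²) + X·∑_{l=1}^{k} (y_{2l−1}² + y_{2l}²)·∏_{j≠l}(X² + a_j²). -/

import Mathlib

open Matrix Polynomial

/-- The `m × m` real matrix built from the `2 × 2` blocks `L (c 0), …, L (c (n-1))`
(where `L a` has first row `(0, -a)` and second row `(a, 0)`) placed along the
diagonal, all remaining entries being `0`.  For `m = 2n` this is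
`diag (L c₁, …, L cₙ)`; for `m = 2n+1` this is `diag (L c₁, …, L cₙ, 0)`. -/
def diagL (m n : ℕ) (c : Fin n → ℝ) : Matrix (Fin m) (Fin m) ℝ :=
  Matrix.of fun i j =>
    if h : i.val / 2 = j.val / 2 ∧ i.val / 2 < n then
      if i.val % 2 = 0 ∧ j.val % 2 = 1 then -c ⟨i.val / 2, h.2⟩
      else if i.val % 2 = 1 ∧ j.val % 2 = 0 then c ⟨i.val / 2, h.2⟩
      else 0
    else 0

/-- The `(2k+1) × (2k+1)` real skew-symmetric matrix `A(a, Y)` with top-left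
`2k × 2k` block `diag (L a₁, …, L aₖ)`, last column `(y₁, …, y_{2k}, 0)ᵀ` and
last row `(-y₁, …, -y_{2k}, 0)`. -/
def Aodd (k : ℕ) (a : Fin k → ℝ) (Y : Fin (2*k) → ℝ) :
    Matrix (Fin (2*k+1)) (Fin (2*k+1)) ℝ :=
  Matrix.of fun i j =>
    if hi : i.val < 2*k then
      if hj : j.val < 2*k then diagL (2*k) k a ⟨i.val, hi⟩ ⟨j.val, hj⟩
      else Y ⟨i.val, hi⟩
    else if hj : j.val < 2*k then -Y ⟨j.val, hj⟩ else 0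

lemma eval_charpoly' {n : ℕ} (M : Matrix (Fin n) (Fin n) ℝ) (t : ℝ) :
    (M.charpoly).eval t = (Matrix.diagonal (fun _ => t) - M).det := by
  rw [Matrix.charpoly, ← Polynomial.coe_evalRingHom, RingHom.map_det]
  congr 1
  ext i j
  by_cases h : i = j <;>
    simp [h, Matrix.charmatrix_apply_eq, Matrix.charmatrix_apply_ne, Matrix.diagonal_apply,
      Matrix.map_apply]

lemma diagL_shift (k : ℕ) (a : Fin (k+1) → ℝ) (p q : Fin (2*k))
    (hp : 2 + p.val < 2*(k+1)) (hq : 2 + q.val < 2*(k+1)) :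
    diagL (2*(k+1)) (k+1) a ⟨2+p.val, hp⟩ ⟨2+q.val, hq⟩
      = diagL (2*k) k (fun j => a j.succ) p q := by
  simp only [diagL, Matrix.of_apply]
  have h1 : (2+p.val)/2 = p.val/2 + 1 := by omega
  have h2 : (2+q.val)/2 = q.val/2 + 1 := by omega
  have h3 : (2+p.val) % 2 = p.val % 2 := by omega
  have h4 : (2+q.val) % 2 = q.val % 2 := by omega
  by_cases h : p.val / 2 = q.val / 2 ∧ p.val / 2 < k
  · rw [dif_pos (by omega), dif_pos h]
    have e1 : (⟨(2+p.val)/2, by omega⟩ : Fin (k+1)) = Fin.succ ⟨p.val/2, h.2⟩ := by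
      ext; simp [h1]
    rw [h3, h4, e1]
  · rw [dif_neg (by omega), dif_neg h]
lemma detBlock : ∀ (k : ℕ) (a : Fin k → ℝ) (t : ℝ),
    (Matrix.diagonal (fun _ => t) - diagL (2*k) k a).det = ∏ j, (t^2 + a j ^2) := by
  intro k
  induction k with
  | zero =>
    intro a t
    rw [Matrix.det_eq_one_of_card_eq_zero (by norm_num)]
    simp
  | succ k ih =>
    intro a t
    have hcast : 2 + 2*k = 2*(k+1) := by omega
    set e : Fin 2 ⊕ Fin (2*k) ≃ Fin (2*(k+1)) := finSumFinEquiv.trans (finCongr hcast) with he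
    have evL : ∀ i : Fin 2, e (Sum.inl i) = ⟨i.val, by omega⟩ := by
      intro i; rw [he, Fin.ext_iff]; simp
    have evR : ∀ p : Fin (2*k), e (Sum.inr p) = ⟨2 + p.val, by omega⟩ := by
      intro p; rw [he, Fin.ext_iff]; simp; omega
    rw [← Matrix.det_submatrix_equiv_self e]
    have hsub : (Matrix.diagonal (fun _ => t) - diagL (2*(k+1)) (k+1) a).submatrix e e =
        Matrix.fromBlocks !![t, a 0; -(a 0), t] 0 0
          (Matrix.diagonal (fun _ => t) - diagL (2*k) k (fun j => a j.succ)) := by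
      ext i j
      cases i with
      | inl i => cases j with
        | inl j =>
          rw [Matrix.submatrix_apply, evL i, evL j]
          have hm : 1 % (2*(k+1)) = 1 := Nat.mod_eq_of_lt (by omega)
          fin_cases i <;> fin_cases j <;>
            norm_num [diagL, Matrix.diagonal_apply, Matrix.sub_apply, Fin.ext_iff,
              Matrix.fromBlocks_apply₁₁, hm]
        | inr p =>
          rw [Matrix.submatrix_apply, evL i, evR p]
          simp only [Matrix.sub_apply, Matrix.diagonal_apply, diagL, Matrix.of_apply,
            Matrix.fromBlocks_apply₁₂, Matrix.zero_apply]
          have : i.val < 2 := i.isLt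
          rw [if_neg (by simp only [Fin.ext_iff, Fin.val_mk]; omega), dif_neg (by omega)]
          ring
      | inr p => cases j with
        | inl j =>
          rw [Matrix.submatrix_apply, evR p, evL j]
          simp only [Matrix.sub_apply, Matrix.diagonal_apply, diagL, Matrix.of_apply,
            Matrix.fromBlocks_apply₂₁, Matrix.zero_apply]
          have : j.val < 2 := j.isLt
          rw [if_neg (by simp only [Fin.ext_iff, Fin.val_mk]; omega), dif_neg (by omega)]
          ring
        | inr q =>
          rw [Matrix.submatrix_apply, evR p, evR q]
          simp only [Matrix.sub_apply, Matrix.diagonal_apply, Matrix.fromBlocks_apply₂₂]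
          rw [diagL_shift]
          congr 1
          simp [Fin.ext_iff]
    rw [hsub, Matrix.det_fromBlocks_zero₂₁, ih, Matrix.det_fin_two_of, Fin.prod_univ_succ]
    ring
lemma prod_erase_zero' {k : ℕ} (f : Fin (k+1) → ℝ) (h : f 0 ≠ 0) :
    ∏ j ∈ Finset.univ.erase (0 : Fin (k+1)), f j = ∏ j : Fin k, f j.succ := by
  apply mul_left_cancel₀ h
  rw [Finset.mul_prod_erase Finset.univ f (Finset.mem_univ _), Fin.prod_univ_succ]

lemma prod_erase_succ' {k : ℕ} (f : Fin (k+1) → ℝ) (l : Fin k) (h : f l.succ ≠ 0) :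
    ∏ j ∈ Finset.univ.erase l.succ, f j
      = f 0 * ∏ j ∈ Finset.univ.erase l, f (Fin.succ j) := by
  apply mul_left_cancel₀ h
  rw [Finset.mul_prod_erase Finset.univ f (Finset.mem_univ _), Fin.prod_univ_succ,
    ← Finset.mul_prod_erase Finset.univ (fun j => f (Fin.succ j)) (Finset.mem_univ l)]
  ring

lemma key_step {k : ℕ} (t : ℝ) (w f : Fin (k+1) → ℝ) (hf : ∀ j, f j ≠ 0) :
    t * ∏ j, f j + t * ∑ l : Fin (k+1), w l * ∏ j ∈ Finset.univ.erase l, f j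
      = f 0 * (t * ∏ j : Fin k, f j.succ
          + t * ∑ l : Fin k, w l.succ * ∏ j ∈ Finset.univ.erase l, f j.succ)
        + t * w 0 * ∏ j : Fin k, f j.succ := by
  rw [Fin.prod_univ_succ, Fin.sum_univ_succ, prod_erase_zero' f (hf 0),
    Finset.sum_congr rfl (fun l _ => by rw [prod_erase_succ' f l (hf l.succ)]),
    show (∑ l : Fin k, w l.succ * (f 0 * ∏ j ∈ Finset.univ.erase l, f (Fin.succ j)))
        = f 0 * ∑ l : Fin k, w l.succ * ∏ j ∈ Finset.univ.erase l, f j.succ by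
      rw [Finset.mul_sum]; exact Finset.sum_congr rfl (fun l _ => by ring)]
  ring

lemma detAodd : ∀ (k : ℕ) (a : Fin k → ℝ) (Y : Fin (2*k) → ℝ) (t : ℝ), t ≠ 0 →
    (Matrix.diagonal (fun _ => t) - Aodd k a Y).det
      = t * ∏ j, (t^2 + a j ^2)
        + t * ∑ l : Fin k,
            (Y ⟨2*l.val, by omega⟩^2 + Y ⟨2*l.val+1, by omega⟩^2) *
            ∏ j ∈ Finset.univ.erase l, (t^2 + a j ^2) := by
  intro k
  induction k with
  | zero =>
    intro a Y t ht
    rw [← Matrix.det_submatrix_equiv_self (finCongr (by norm_num : 1 = 2*0+1))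
      (Matrix.diagonal (fun _ => t) - Aodd 0 a Y), Matrix.det_fin_one]
    simp [Aodd, Matrix.diagonal_apply]
  | succ k ih =>
    intro a Y t ht
    have ha0 : t^2 + a 0 ^ 2 ≠ 0 := by positivity
    have hcast : 2 + (2*k+1) = 2*(k+1)+1 := by omega
    set e : Fin 2 ⊕ Fin (2*k+1) ≃ Fin (2*(k+1)+1) := finSumFinEquiv.trans (finCongr hcast)
      with he
    have evL : ∀ i : Fin 2, e (Sum.inl i) = ⟨i.val, by omega⟩ := by
      intro i; rw [he, Fin.ext_iff]; simp
    have evR : ∀ p : Fin (2*k+1), e (Sum.inr p) = ⟨2 + p.val, by omega⟩ := by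
      intro p; rw [he, Fin.ext_iff]; simp; omega
    set a' : Fin k → ℝ := fun j => a j.succ with ha'
    set Y' : Fin (2*k) → ℝ := fun i => Y ⟨2 + i.val, by have := i.isLt; omega⟩ with hY'
    set Ablk : Matrix (Fin 2) (Fin 2) ℝ := !![t, a 0; -(a 0), t] with hAblk
    set B : Matrix (Fin 2) (Fin (2*k+1)) ℝ :=
      Matrix.of (fun i p => if p.val = 2*k then -(Y ⟨i.val, by have := i.isLt; omega⟩) else 0)
      with hB
    set Cb : Matrix (Fin (2*k+1)) (Fin 2) ℝ :=
      Matrix.of (fun p i => if p.val = 2*k then Y ⟨i.val, by have := i.isLt; omega⟩ else 0)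
      with hCb
    set D : Matrix (Fin (2*k+1)) (Fin (2*k+1)) ℝ :=
      Matrix.diagonal (fun _ => t) - Aodd k a' Y' with hD
    have hsub : (Matrix.diagonal (fun _ => t) - Aodd (k+1) a Y).submatrix e e =
        Matrix.fromBlocks Ablk B Cb D := by
      ext i j
      cases i with
      | inl i => cases j with
        | inl j =>
          rw [Matrix.submatrix_apply, evL i, evL j]
          have h0 : (0:ℕ) < 2*(k+1) := by omega
          have h2 : (1:ℕ) < 2*(k+1) := by omega
          have hm : 1 % (2*(k+1)+1) = 1 := Nat.mod_eq_of_lt (by omega)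
          fin_cases i <;> fin_cases j <;>
            norm_num [Aodd, diagL, Matrix.diagonal_apply, Matrix.sub_apply, Fin.ext_iff,
              hAblk, Matrix.fromBlocks_apply₁₁, h0, h2, hm]
        | inr p =>
          rw [Matrix.submatrix_apply, evL i, evR p]
          have hi2 : i.val < 2 := i.isLt
          have hpk : p.val < 2*k+1 := p.isLt
          simp only [Matrix.sub_apply, Matrix.diagonal_apply, Aodd, Matrix.of_apply,
            Matrix.fromBlocks_apply₁₂, hB]
          rw [if_neg (by simp only [Fin.ext_iff, Fin.val_mk]; omega), dif_pos (by omega)]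
          by_cases hp : p.val = 2*k
          · rw [dif_neg (by omega), if_pos hp]; ring
          · rw [dif_pos (by omega), if_neg hp]
            simp only [diagL, Matrix.of_apply]
            rw [dif_neg (by omega)]; ring
      | inr p => cases j with
        | inl j =>
          rw [Matrix.submatrix_apply, evR p, evL j]
          have hj2 : j.val < 2 := j.isLt
          have hpk : p.val < 2*k+1 := p.isLt
          simp only [Matrix.sub_apply, Matrix.diagonal_apply, Aodd, Matrix.of_apply,
            Matrix.fromBlocks_apply₂₁, hCb]
          rw [if_neg (by simp only [Fin.ext_iff, Fin.val_mk]; omega)]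
          by_cases hp : p.val = 2*k
          · rw [dif_neg (by omega), dif_pos (by omega), if_pos hp]; ring
          · rw [dif_pos (by omega), dif_pos (by omega), if_neg hp]
            simp only [diagL, Matrix.of_apply]
            rw [dif_neg (by omega)]; ring
        | inr q =>
          rw [Matrix.submatrix_apply, evR p, evR q]
          have hpk : p.val < 2*k+1 := p.isLt
          have hqk : q.val < 2*k+1 := q.isLt
          simp only [Matrix.sub_apply, Matrix.diagonal_apply, Aodd, Matrix.of_apply,
            Matrix.fromBlocks_apply₂₂, hD]
          have hdiag : ((⟨2+p.val, by omega⟩ : Fin (2*(k+1)+1)) = ⟨2+q.val, by omega⟩) ↔ p = q := by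
            simp [Fin.ext_iff]
          congr 1
          · exact if_congr hdiag rfl rfl
          by_cases hp : p.val < 2*k <;> by_cases hq : q.val < 2*k
          · rw [dif_pos (by omega), dif_pos (by omega),
              dif_pos (by omega), dif_pos (by omega)]
            have := diagL_shift k a ⟨p.val, by omega⟩ ⟨q.val, by omega⟩ (by omega) (by omega)
            simpa [ha'] using this
          · rw [dif_pos (by omega), dif_neg (by omega),
              dif_pos (by omega), dif_neg (by omega)]
            all_goals simp [hY']
          · rw [dif_neg (by omega), dif_pos (by omega),
              dif_neg (by omega), dif_pos (by omega)]
            all_goals simp [hY']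
          · rw [dif_neg (by omega), dif_neg (by omega),
              dif_neg (by omega), dif_neg (by omega)]
    haveI instInv : Invertible Ablk := Matrix.invertibleOfIsUnitDet Ablk (by
      rw [hAblk, Matrix.det_fin_two_of]
      apply isUnit_iff_ne_zero.mpr
      have h : t * t - a 0 * -(a 0) = t^2 + a 0^2 := by ring
      rw [h]; exact ha0)
    have hdetA : Ablk.det = t^2 + a 0^2 := by rw [hAblk, Matrix.det_fin_two_of]; ring
    have hinv : ⅟Ablk = (t^2 + a 0^2)⁻¹ • !![t, -(a 0); a 0, t] := by
      rw [Matrix.invOf_eq_nonsing_inv, Matrix.inv_def, hdetA, hAblk, Matrix.adjugate_fin_two]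
      norm_num [Ring.inverse_eq_inv']
    set y0 : ℝ := Y ⟨0, by omega⟩ with hy0
    set y1 : ℝ := Y ⟨1, by omega⟩ with hy1
    set c : ℝ := t * (y0^2 + y1^2) / (t^2 + a 0^2) with hc
    have hCAB : Cb * ⅟Ablk * B = Matrix.of (fun p q : Fin (2*k+1) =>
        if p.val = 2*k ∧ q.val = 2*k then -c else 0) := by
      rw [hinv]; ext p q
      simp only [Matrix.mul_apply, Matrix.smul_apply, Matrix.of_apply, hB, hCb,
        Fin.sum_univ_two, smul_eq_mul]
      by_cases hp : p.val = 2*k <;> by_cases hq : q.val = 2*k <;>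
        simp [hp, hq, hc, hy0, hy1] <;> field_simp <;> ring
    have hS : D - Cb * ⅟Ablk * B = D.updateRow (Fin.last (2*k))
        (D (Fin.last (2*k)) + c • (Pi.single (Fin.last (2*k)) 1 : Fin (2*k+1) → ℝ)) := by
      rw [hCAB]; ext p q
      rcases eq_or_ne p (Fin.last (2*k)) with hp | hp
      · subst hp
        rcases eq_or_ne q (Fin.last (2*k)) with hq | hq
        · subst hq
          simp [Matrix.updateRow_self, Matrix.sub_apply, Pi.single_eq_same, Fin.val_last]
        · have hq' : ¬ (q.val = 2*k) := fun h => hq (Fin.ext (by simp [h, Fin.val_last]))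
          simp [Matrix.updateRow_self, Matrix.sub_apply, Pi.single_eq_of_ne hq, hq', Fin.val_last]
      · have hp' : ¬ (p.val = 2*k) := fun h => hp (Fin.ext (by simp [h, Fin.val_last]))
        simp [Matrix.updateRow_ne hp, Matrix.sub_apply, hp']
    have hN : (D.updateRow (Fin.last (2*k)) (Pi.single (Fin.last (2*k)) 1)).det
        = ∏ j : Fin k, (t^2 + a' j ^2) := by
      rw [Matrix.det_succ_row _ (Fin.last (2*k)), Finset.sum_eq_single (Fin.last (2*k))]
      · simp only [Matrix.updateRow_self, Pi.single_eq_same, Fin.succAbove_last, Fin.val_last]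
        have hpow : ((-1:ℝ))^(2*k + 2*k) = 1 := Even.neg_one_pow ⟨2*k, by ring⟩
        rw [hpow, one_mul, one_mul]
        have hsubm : ((D.updateRow (Fin.last (2*k)) (Pi.single (Fin.last (2*k)) 1)).submatrix
            Fin.castSucc Fin.castSucc) = Matrix.diagonal (fun _ => t) - diagL (2*k) k a' := by
          ext p q
          rw [Matrix.submatrix_apply,
            Matrix.updateRow_ne (Fin.castSucc_lt_last p).ne]
          simp only [hD, Matrix.sub_apply, Matrix.diagonal_apply, Aodd, Matrix.of_apply]
          have hp : (Fin.castSucc p).val < 2*k := p.isLt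
          have hq : (Fin.castSucc q).val < 2*k := q.isLt
          rw [dif_pos hp, dif_pos hq]
          congr 1
          · simp [Fin.ext_iff]
        rw [hsubm, detBlock]
      · intro j _ hj
        simp [Matrix.updateRow_self, Pi.single_eq_of_ne hj]
      · intro h; exact absurd (Finset.mem_univ _) h
    rw [← Matrix.det_submatrix_equiv_self e, hsub, Matrix.det_fromBlocks₁₁, hS,
      Matrix.det_updateRow_add, Matrix.det_updateRow_smul, Matrix.updateRow_eq_self, hN,
      hdetA, ih a' Y' t ht]
    rw [key_step t
      (fun l => Y ⟨2*l.val, by omega⟩^2 + Y ⟨2*l.val+1, by omega⟩^2)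
      (fun j => t^2 + a j^2) (fun j => by positivity)]
    simp only [ha']
    have hsum : (∑ l : Fin k, (Y' ⟨2*l.val, by omega⟩^2
          + Y' ⟨2*l.val+1, by omega⟩^2)
          * ∏ j ∈ Finset.univ.erase l, (t^2 + a j.succ ^2))
        = ∑ l : Fin k, (Y ⟨2*(l.succ).val, by omega⟩^2
          + Y ⟨2*(l.succ).val+1, by omega⟩^2)
          * ∏ j ∈ Finset.univ.erase l, (t^2 + a j.succ ^2) := by
      apply Finset.sum_congr rfl
      intro l _
      have e1 : Y' ⟨2*l.val, by omega⟩
          = Y ⟨2*(l.succ).val, by omega⟩ := by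
        rw [hY']; exact congrArg Y (Fin.ext (by show 2 + 2*l.val = 2*(l.val+1); omega))
      have e2 : Y' ⟨2*l.val+1, by omega⟩
          = Y ⟨2*(l.succ).val+1, by omega⟩ := by
        rw [hY']; exact congrArg Y (Fin.ext (by show 2 + (2*l.val+1) = 2*(l.val+1)+1; omega))
      rw [e1, e2]
    rw [hsum]
    have e0 : Y ⟨2*(0:Fin (k+1)).val, by omega⟩ = y0 := by
      rw [hy0]; congr 1
    have e0' : Y ⟨2*(0:Fin (k+1)).val+1, by omega⟩ = y1 := by
      rw [hy1]; congr 1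
    rw [e0, e0', hc]
    field_simp

/-- The characteristic polynomial of the bordered skew-symmetric matrix `A(a, Y)`:
`χ(X) = X·∏ⱼ(X² + aⱼ²) + X·∑ₗ (y_{2l-1}² + y_{2l}²)·∏_{j≠l}(X² + aⱼ²)`. -/
theorem statement6 (k : ℕ) (hk : 1 ≤ k) (a : Fin k → ℝ) (Y : Fin (2*k) → ℝ) :
    (Aodd k a Y).charpoly =
      X * ∏ j : Fin k, (X ^ 2 + C (a j ^ 2)) +
      X * ∑ l : Fin k,
        C (Y ⟨2 * l.val, by have := l.isLt; omega⟩ ^ 2 +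
           Y ⟨2 * l.val + 1, by have := l.isLt; omega⟩ ^ 2) *
        ∏ j ∈ Finset.univ.erase l, (X ^ 2 + C (a j ^ 2)) := by
  apply Polynomial.eq_of_infinite_eval_eq
  have h1 : ({x : ℝ | x ≠ 0}).Infinite := Set.infinite_of_finite_compl (by simp)
  apply h1.mono
  intro t ht
  have ht : t ≠ 0 := ht
  show eval t _ = eval t _
  rw [eval_charpoly', detAodd k a Y t ht]
  simp [eval_prod, eval_finset_sum]
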